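/- If λ and μ are unimodular complex numbers such that λ/μ is a primitive k-th root of unity with k odd, then sup { |λⁿ - μⁿ| : n = 1, 2, 3, … } = |1 - e^{iπ(k-1)/k}|. -/

import Mathlib

lemma abs_exp_mul_I_sub_one' (θ : ℝ) :
    ‖Complex.exp (θ * Complex.I) - 1‖ = 2 * |Real.sin (θ / 2)| := by
  have h : ‖Complex.exp (θ * Complex.I) - 1‖ ^ 2 = (2 * |Real.sin (θ / 2)|) ^ 2 := by
    rw [Complex.sq_norm, Complex.normSq_apply, mul_pow, _root_.sq_abs]
    simp [Complex.exp_mul_I, Complex.cos_ofReal_re, Complex.sin_ofReal_re]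
    have h1 := Real.sin_sq_eq_half_sub (θ / 2)
    have h2 := Real.sin_sq_add_cos_sq θ
    ring_nf
    ring_nf at h1
    nlinarith [h1, h2]
  have h1 : (0:ℝ) ≤ ‖Complex.exp (θ * Complex.I) - 1‖ := norm_nonneg _
  have h2 : (0:ℝ) ≤ 2 * |Real.sin (θ / 2)| := by positivity
  nlinarith


lemma sin_le_aux (k t : ℕ) (hk : Odd k) (ht : t < k) :
    |Real.sin (Real.pi * t / k)| ≤ Real.sin (Real.pi * ((k : ℝ) - 1) / k / 2) := by
  obtain ⟨a, ha⟩ := hk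
  have hkR : (k : ℝ) = 2 * a + 1 := by rw [ha]; push_cast; ring
  have hkpos : (0 : ℝ) < k := by rw [hkR]; positivity
  have hπ := Real.pi_pos
  have ha0 : (0:ℝ) ≤ (a:ℝ) := Nat.cast_nonneg a
  have hx0 : 0 ≤ Real.pi * t / k := by positivity
  have hxπ : Real.pi * t / k ≤ Real.pi := by
    rw [div_le_iff₀ hkpos]
    have : (t : ℝ) ≤ k := by exact_mod_cast ht.le
    nlinarith
  have hk1 : (0:ℝ) ≤ (k:ℝ) - 1 := by rw [hkR]; linarith
  have hy0 : 0 ≤ Real.pi * ((k : ℝ) - 1) / k / 2 := by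
    apply div_nonneg (div_nonneg (by nlinarith) hkpos.le) (by norm_num)
  have hy2 : Real.pi * ((k : ℝ) - 1) / k / 2 ≤ Real.pi / 2 := by
    rw [div_le_div_iff₀ (by positivity) (by norm_num), div_mul_eq_mul_div,
      div_le_iff₀ hkpos]
    nlinarith
  have hpos : (0:ℝ) ≤ 2*(a:ℝ)+1 := by positivity
  rw [abs_of_nonneg (Real.sin_nonneg_of_nonneg_of_le_pi hx0 hxπ)]
  rcases le_or_gt t a with hta | hta
  · apply Real.sin_le_sin_of_le_of_le_pi_div_two (by linarith) hy2
    rw [div_div, div_le_div_iff₀ hkpos (by positivity)]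
    have h1 : (t : ℝ) ≤ a := by exact_mod_cast hta
    rw [hkR]
    nlinarith [mul_nonneg (mul_nonneg hπ.le hpos) (sub_nonneg.2 h1)]
  · rw [← Real.sin_pi_sub]
    apply Real.sin_le_sin_of_le_of_le_pi_div_two (by linarith) hy2
    have hta' : (a : ℝ) + 1 ≤ t := by exact_mod_cast hta
    rw [sub_le_iff_le_add, div_div, div_add_div _ _ (by positivity : ((k:ℝ)*2) ≠ 0) hkpos.ne',
      le_div_iff₀ (by positivity), hkR]
    nlinarith [mul_nonneg (mul_nonneg hπ.le hpos) (by linarith : (0:ℝ) ≤ (t:ℝ) - ((a:ℝ)+1))]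

/-- If `λ`, `μ` are unimodular complex numbers such that `λ/μ` is a primitive `k`-th
root of unity with `k` odd, then
`sup { |λⁿ - μⁿ| : n = 1, 2, 3, … } = |1 - e^{iπ(k-1)/k}|`. -/
theorem sup_pow_diff_odd_root_of_unity (l m : ℂ) (hl : ‖l‖ = 1)
    (hm : ‖m‖ = 1) (k : ℕ) (hk : Odd k) (hk0 : 0 < k)
    (h : IsPrimitiveRoot (l / m) k) :
    sSup {r : ℝ | ∃ n : ℕ, 1 ≤ n ∧ r = ‖l ^ n - m ^ n‖}
      = ‖1 - Complex.exp (Real.pi * ((k : ℝ) - 1) / k * Complex.I)‖ := by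
  haveI : NeZero k := ⟨hk0.ne'⟩
  have hm0 : m ≠ 0 := by
    intro h0
    rw [h0, norm_zero] at hm
    norm_num at hm
  have key : ∀ n : ℕ, ‖l ^ n - m ^ n‖ = ‖(l / m) ^ n - 1‖ := by
    intro n
    have he : l ^ n - m ^ n = m ^ n * ((l / m) ^ n - 1) := by
      rw [div_pow, mul_sub, mul_div_assoc', mul_div_cancel_left₀ _ (pow_ne_zero n hm0), mul_one]
    rw [he, norm_mul, norm_pow, hm, one_pow, one_mul]
  have hkpos : (0 : ℝ) < k := by exact_mod_cast hk0
  have hRval : ‖1 - Complex.exp (Real.pi * ((k : ℝ) - 1) / k * Complex.I)‖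
      = 2 * |Real.sin (Real.pi * ((k : ℝ) - 1) / k / 2)| := by
    rw [← norm_neg, neg_sub]
    have : (Real.pi * ((k : ℝ) - 1) / k : ℂ) * Complex.I
        = ((Real.pi * ((k : ℝ) - 1) / k : ℝ) : ℂ) * Complex.I := by push_cast; ring
    rw [this, abs_exp_mul_I_sub_one']
  apply IsGreatest.csSup_eq
  constructor
  · -- membership
    rcases eq_or_lt_of_le (Nat.one_le_iff_ne_zero.2 hk0.ne') with hk1 | hk1
    · -- k = 1
      refine ⟨1, le_refl 1, ?_⟩
      have hζ : l / m = 1 := by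
        have := h.pow_eq_one
        rwa [← hk1, pow_one] at this
      rw [key, pow_one, hζ, sub_self, norm_zero]
      subst hk1
      simp
    · -- k ≥ 2
      have hprim := Complex.isPrimitiveRoot_exp k hk0.ne'
      obtain ⟨i, hik, hie⟩ := h.eq_pow_of_pow_eq_one hprim.pow_eq_one
      have hi0 : i ≠ 0 := by
        intro h0
        rw [h0, pow_zero] at hie
        exact (hprim.ne_one hk1) hie.symm
      obtain ⟨a, ha⟩ := hk
      have ha0 : a ≠ 0 := by omega
      refine ⟨i * a, Nat.one_le_iff_ne_zero.2 (by positivity), ?_⟩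
      rw [key, pow_mul, hie, ← Complex.exp_nat_mul]
      rw [← norm_neg, neg_sub]
      have hkC : (k : ℂ) = 2 * (a : ℂ) + 1 := by rw [ha]; push_cast; ring
      have harg : (Real.pi : ℂ) * ((k : ℂ) - 1) / (k : ℂ) * Complex.I
          = (a : ℂ) * (2 * (Real.pi : ℂ) * Complex.I / (k : ℂ)) := by
        linear_combination ((Real.pi : ℂ) * Complex.I / (k : ℂ)) * hkC
      push_cast
      rw [harg]
  · -- upper bound
    rintro r ⟨n, hn1, rfl⟩
    rw [key, hRval]
    have hpow : ((l / m) ^ n) ^ k = 1 := by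
      rw [← pow_mul, mul_comm, pow_mul, h.pow_eq_one, one_pow]
    have hprim := Complex.isPrimitiveRoot_exp k hk0.ne'
    obtain ⟨t, htk, hte⟩ := hprim.eq_pow_of_pow_eq_one hpow
    rw [← hte, ← Complex.exp_nat_mul]
    have he2 : (t : ℂ) * (2 * Real.pi * Complex.I / k)
        = ((2 * Real.pi * t / k : ℝ) : ℂ) * Complex.I := by
      push_cast
      field_simp
    rw [he2, abs_exp_mul_I_sub_one']
    have hs := sin_le_aux k t hk htk
    have h2 : (2 * Real.pi * t / k) / 2 = Real.pi * t / k := by ring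
    rw [h2]
    have habs : |Real.sin (Real.pi * ((k : ℝ) - 1) / k / 2)|
        = Real.sin (Real.pi * ((k : ℝ) - 1) / k / 2) := by
      apply abs_of_nonneg
      apply Real.sin_nonneg_of_nonneg_of_le_pi
      · obtain ⟨a, ha⟩ := hk
        have hkR : (k : ℝ) = 2 * a + 1 := by rw [ha]; push_cast; ring
        have h1 : (0:ℝ) ≤ (k:ℝ) - 1 := by
          have := Nat.cast_nonneg (α := ℝ) a
          rw [hkR]; linarith
        have := Real.pi_pos
        apply div_nonneg (div_nonneg (by nlinarith) hkpos.le) (by norm_num)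
      · have h1 : ((k:ℝ) - 1) / k ≤ 1 := by
          rw [div_le_one hkpos]; linarith
        have := Real.pi_pos
        calc Real.pi * ((k : ℝ) - 1) / k / 2 = Real.pi * (((k:ℝ)-1)/k) / 2 := by ring
          _ ≤ Real.pi * 1 / 2 := by
              apply div_le_div_of_nonneg_right _ (by norm_num)
              · exact mul_le_mul_of_nonneg_left h1 Real.pi_pos.le
          _ ≤ Real.pi := by linarith
    rw [habs]
    linarith [hs]
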